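/- arXiv:1209.2798 — 2 statements merged into one kernel-verified Lean document; each statement's English description precedes it below -/
import Mathlib

section
/- Let G be a group, (π, V) a finite-dimensional complex representation, χ : G → ℂˣ a character, and B : V × V → ℂ a non-degenerate bilinear form with B(π(g)v, π(g)w) = χ(g)⁻¹B(v,w) for all g,v,w. Suppose s ∈ G satisfies: s² acts on V by a scalar ω ∈ ℂˣ, and there exists v₀ ∈ V with B(π(s)v₀, v₀) ≠ 0. If B(v,w) = ε·B(w,v) for a fixed ε ∈ {±1} and all v,w, then ε = ω · χ(s). -/
/-- Twisted sign formula: if `B(gv,gw) = χ(g)⁻¹B(v,w)`, `π(s²) = ω·id`,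
`B(π(s)v₀, v₀) ≠ 0` and `B(v,w) = ε·B(w,v)` with `ε = ±1`, then `ε = ω·χ(s)`. -/
theorem stmt12 (G : Type*) [Group G] (V : Type*) [AddCommGroup V] [Module ℂ V]
    [FiniteDimensional ℂ V]
    (π : Representation ℂ G V) (χ : G →* ℂˣ)
    (B : V →ₗ[ℂ] V →ₗ[ℂ] ℂ)
    (hnd : ∀ v : V, (∀ w : V, B v w = 0) → v = 0)
    (hinv : ∀ (g : G) (v w : V), B (π g v) (π g w) = (((χ g)⁻¹ : ℂˣ) : ℂ) * B v w)
    (s : G) (ω : ℂˣ) (hs : ∀ v : V, π (s * s) v = (ω : ℂ) • v)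
    (v₀ : V) (hv₀ : B (π s v₀) v₀ ≠ 0)
    (ε : ℂ) (hε : ε = 1 ∨ ε = -1)
    (hsym : ∀ v w : V, B v w = ε * B w v) :
    ε = (ω : ℂ) * ((χ s : ℂˣ) : ℂ) := by
  have key : B (π s v₀) (π s (π s v₀)) = (((χ s)⁻¹ : ℂˣ) : ℂ) * B v₀ (π s v₀) :=
    hinv s v₀ (π s v₀)
  have h2 : π s (π s v₀) = (ω : ℂ) • v₀ := by
    rw [← hs v₀, map_mul]; rfl
  rw [h2, map_smul, smul_eq_mul, hsym v₀ (π s v₀)] at key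
  have hχ : (((χ s)⁻¹ : ℂˣ) : ℂ) ≠ 0 := Units.ne_zero _
  field_simp at key
  have hχ' : ((χ s : ℂˣ) : ℂ) ≠ 0 := Units.ne_zero _
  have hω' : ((ω : ℂˣ) : ℂ) ≠ 0 := Units.ne_zero _
  have := mul_right_cancel₀ hv₀ (by linear_combination (((χ s : ℂˣ) : ℂ) * B (π s v₀) v₀) * key + (ε * B (π s v₀) v₀) * Units.mul_inv (χ s) :
    ((ω : ℂ) * ((χ s : ℂˣ) : ℂ)) * B (π s v₀) v₀ = ε * B (π s v₀) v₀)
  exact this.symm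
end

section
/- Let G be a group, (π, W) an irreducible finite-dimensional complex self-dual representation with non-degenerate G-invariant bilinear form B satisfying B(v,w) = ε(π)·B(w,v). Suppose s ∈ G with s² in the center of G acting on W by the scalar ω(s²), and suppose there exists v₀ ∈ W with B(π(s)v₀, v₀) ≠ 0. Then ε(π) = ω(s²). -/
/-- Prasad's criterion, untwisted case: for a self-dual irreducible representation
with invariant form of sign `ε`, an element `s` with `s²` central acting by the
scalar `ω` and pairing `B(π(s)v₀, v₀) ≠ 0` forces `ε = ω`. -/
theorem stmt13 (G : Type*) [Group G] (W : Type*) [AddCommGroup W] [Module ℂ W]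
    [FiniteDimensional ℂ W]
    (π : Representation ℂ G W)
    (hirr : ∀ U : Submodule ℂ W, (∀ (g : G) (v : W), v ∈ U → π g v ∈ U) → U = ⊥ ∨ U = ⊤)
    (hsd : ∃ e : W ≃ₗ[ℂ] Module.Dual ℂ W, ∀ (g : G) (v : W), e (π g v) = π.dual g (e v))
    (B : W →ₗ[ℂ] W →ₗ[ℂ] ℂ)
    (hnd : ∀ v : W, (∀ w : W, B v w = 0) → v = 0)
    (hinv : ∀ (g : G) (v w : W), B (π g v) (π g w) = B v w)
    (ε : ℂ) (hε : ε = 1 ∨ ε = -1)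
    (hsym : ∀ v w : W, B v w = ε * B w v)
    (s : G) (hc : s * s ∈ Subgroup.center G)
    (ω : ℂ) (hω : ∀ v : W, π (s * s) v = ω • v)
    (v₀ : W) (hv₀ : B (π s v₀) v₀ ≠ 0) :
    ε = ω := by
  have h1 : B (π s v₀) (π s (π s v₀)) = B v₀ (π s v₀) := hinv s v₀ (π s v₀)
  have h2 : π s (π s v₀) = ω • v₀ := by
    have := hω v₀
    rwa [map_mul] at this
  rw [h2] at h1
  have h3 : B (π s v₀) (ω • v₀) = ω * B (π s v₀) v₀ := by simp
  have h4 : B v₀ (π s v₀) = ε * B (π s v₀) v₀ := hsym v₀ (π s v₀)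
  rw [h3, h4] at h1
  exact (mul_right_cancel₀ hv₀ h1.symm)
end
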